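/- A tree T on ℕ has uncountable body [T] if and only if T contains a perfect subtree, i.e. a subset S ⊆ T that is nonempty, closed under prefixes, and in which every element has two incomparable extensions. -/

import Mathlib

/-- A tree (over an alphabet `α`) is a nonempty set of finite sequences closed under
taking prefixes. -/
def IsTree {α : Type*} (T : Set (List α)) : Prop :=
  T.Nonempty ∧ ∀ σ ∈ T, ∀ τ : List α, τ <+: σ → τ ∈ T

/-- The body of a tree: the set of infinite sequences all of whose finite initial
segments belong to `T`. -/
def body {α : Type*} (T : Set (List α)) : Set (ℕ → α) :=
  {f | ∀ n : ℕ, List.ofFn (fun i : Fin n => f i) ∈ T}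

/-- Two finite sequences are incomparable if neither is a prefix of the other. -/
def Incomp {α : Type*} (σ τ : List α) : Prop :=
  ¬σ <+: τ ∧ ¬τ <+: σ

/-- A tree is perfect if every element has two incomparable proper extensions in the tree. -/
def PerfectTree {α : Type*} (T : Set (List α)) : Prop :=
  ∀ σ ∈ T, ∃ τ ∈ T, ∃ τ' ∈ T,
    (σ <+: τ ∧ σ ≠ τ) ∧ (σ <+: τ' ∧ σ ≠ τ') ∧ Incomp τ τ'

/-- A perfect subtree of `T` is a nonempty subset of `T` closed under prefixes, in which
every element has two incomparable extensions. -/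
def PerfectSubtree {α : Type*} (S T : Set (List α)) : Prop :=
  S ⊆ T ∧ S.Nonempty ∧ (∀ σ ∈ S, ∀ τ : List α, τ <+: σ → τ ∈ S) ∧ PerfectTree S

/- ### Auxiliary lemmas -/

private lemma ofFn_congr' {α : Type*} (f : ℕ → α) {m n : ℕ} (h : m = n) :
    List.ofFn (fun i : Fin m => f i) = List.ofFn (fun i : Fin n => f i) := by subst h; rfl

private lemma ofFn_take' {α : Type*} (f : ℕ → α) {m n : ℕ} (h : m ≤ n) :
    (List.ofFn fun i : Fin n => f i).take m = List.ofFn fun i : Fin m => f i := by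
  apply List.ext_getElem
  · simp [h]
  · intro i h1 h2
    simp [List.getElem_take, List.getElem_ofFn]

private lemma ofFn_prefix' {α : Type*} (f : ℕ → α) {m n : ℕ} (h : m ≤ n) :
    (List.ofFn fun i : Fin m => f i) <+: List.ofFn fun i : Fin n => f i := by
  rw [← ofFn_take' f h]; exact List.take_prefix _ _

private lemma incomp_of_length_eq {α : Type*} {σ τ : List α} (hl : σ.length = τ.length)
    (hne : σ ≠ τ) : Incomp σ τ :=
  ⟨fun h => hne (h.eq_of_length hl), fun h => hne ((h.eq_of_length hl.symm).symm)⟩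

private lemma prefix_length_lt {α : Type*} {σ τ : List α} (h : σ <+: τ) (hne : σ ≠ τ) :
    σ.length < τ.length :=
  lt_of_le_of_ne h.length_le (fun he => hne (h.eq_of_length he))

private lemma take_of_prefix {α : Type*} {σ τ : List α} (h : σ <+: τ) :
    τ.take σ.length = σ := by
  obtain ⟨t, rfl⟩ := h; exact List.take_left

private lemma not_countable_cantor : ¬ Countable (ℕ → Bool) := by
  classical
  intro h
  have h2 : Countable (Set ℕ) := by
    have hf : Function.Injective (fun s : Set ℕ => fun n => decide (n ∈ s)) := by
      intro s t hst
      ext n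
      have := congrFun hst n
      simpa using this
    exact hf.countable
  obtain ⟨f, hf⟩ := (countable_iff_exists_injective (Set ℕ)).mp h2
  exact Function.cantor_injective f hf

/-- Iterated branching function. -/
private def buildE (t0 t1 : List ℕ → List ℕ) (s0 : List ℕ) : List Bool → List ℕ
  | [] => s0
  | b :: l => (bif b then t1 else t0) (buildE t0 t1 s0 l)

section Build

variable {S : Set (List ℕ)} {t0 t1 : List ℕ → List ℕ} {s0 : List ℕ}
variable (hs0 : s0 ∈ S)
variable (h0 : ∀ σ ∈ S, t0 σ ∈ S ∧ σ <+: t0 σ ∧ σ ≠ t0 σ)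
variable (h1 : ∀ σ ∈ S, t1 σ ∈ S ∧ σ <+: t1 σ ∧ σ ≠ t1 σ)

include hs0 h0 h1

private lemma buildE_mem : ∀ l, buildE t0 t1 s0 l ∈ S := by
  intro l
  induction l with
  | nil => exact hs0
  | cons b l ih =>
    cases b
    · simpa [buildE] using (h0 _ ih).1
    · simpa [buildE] using (h1 _ ih).1

private lemma buildE_prefix_cons (b : Bool) (l : List Bool) :
    buildE t0 t1 s0 l <+: buildE t0 t1 s0 (b :: l) ∧
      buildE t0 t1 s0 l ≠ buildE t0 t1 s0 (b :: l) := by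
  have hm := buildE_mem hs0 h0 h1 l
  cases b
  · simpa [buildE] using (h0 _ hm).2
  · simpa [buildE] using (h1 _ hm).2

private lemma buildE_length : ∀ l : List Bool, l.length ≤ (buildE t0 t1 s0 l).length := by
  intro l
  induction l with
  | nil => exact Nat.zero_le _
  | cons b l ih =>
    have h := buildE_prefix_cons hs0 h0 h1 b l
    have hlt := prefix_length_lt h.1 h.2
    simpa using Nat.lt_of_le_of_lt ih hlt

private lemma buildE_suffix_mono : ∀ {l₂ l₁ : List Bool}, l₁ <:+ l₂ →
    buildE t0 t1 s0 l₁ <+: buildE t0 t1 s0 l₂ := by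
  intro l₂
  induction l₂ with
  | nil => intro l₁ h; rw [List.suffix_nil.mp h]
  | cons b l ih =>
    intro l₁ h
    rcases List.suffix_cons_iff.mp h with h | h
    · rw [h]
    · exact (ih h).trans (buildE_prefix_cons hs0 h0 h1 b l).1

end Build

/-- The stage-`n` (reversed) history of a binary sequence. -/
private def stage (f : ℕ → Bool) (n : ℕ) : List Bool :=
  (List.ofFn fun i : Fin n => f i).reverse

private lemma stage_length (f : ℕ → Bool) (n : ℕ) : (stage f n).length = n := by
  simp [stage]

private lemma stage_suffix (f : ℕ → Bool) {m n : ℕ} (h : m ≤ n) :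
    stage f m <:+ stage f n :=
  List.reverse_suffix.mpr (ofFn_prefix' f h)

private lemma stage_succ (f : ℕ → Bool) (n : ℕ) : stage f (n + 1) = f n :: stage f n := by
  unfold stage
  rw [List.ofFn_succ']
  simp [List.concat_eq_append]

private lemma stage_congr {f g : ℕ → Bool} {n : ℕ} (h : ∀ k < n, f k = g k) :
    stage f n = stage g n := by
  unfold stage
  congr 1
  apply List.ext_getElem <;> simp
  intro i hi
  exact h i hi

/-- **Perfect tree theorem**: a tree on `ℕ` has uncountable body iff it contains a perfect
subtree. -/
theorem uncountable_body_iff_perfectSubtree {T : Set (List ℕ)} (hT : IsTree T) :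
    ¬(body T).Countable ↔ ∃ S : Set (List ℕ), PerfectSubtree S T := by
  constructor
  · -- forward: uncountable body gives perfect subtree
    intro hunc
    classical
    set B : List ℕ → Set (ℕ → ℕ) := fun σ =>
      {f | f ∈ body T ∧ List.ofFn (fun i : Fin σ.length => f i) = σ} with hB
    set S : Set (List ℕ) := {σ | σ ∈ T ∧ ¬(B σ).Countable} with hS
    have hBmono : ∀ {σ τ : List ℕ}, τ <+: σ → B σ ⊆ B τ := by
      intro σ τ hpre f hf
      refine ⟨hf.1, ?_⟩
      have h1 : (List.ofFn fun i : Fin σ.length => f i).take τ.length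
          = List.ofFn fun i : Fin τ.length => f i := ofFn_take' f hpre.length_le
      rw [← h1, hf.2, take_of_prefix hpre]
    refine ⟨S, fun σ hσ => hσ.1, ⟨[], ?_, ?_⟩, ?_, ?_⟩
    · obtain ⟨σ0, hσ0⟩ := hT.1
      exact hT.2 σ0 hσ0 [] (List.nil_prefix)
    · -- B [] = body T
      have hBe : B [] = body T := by
        ext f; simp [hB]
      rw [hBe]; exact hunc
    · intro σ hσ τ hpre
      exact ⟨hT.2 σ hσ.1 τ hpre, fun hc => hσ.2 (hc.mono (hBmono hpre))⟩
    · -- perfectness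
      intro σ hσ
      by_contra hcon
      push_neg at hcon
      apply hσ.2
      have hsub : B σ ⊆ (⋃ τ ∈ {τ : List ℕ | τ ∉ S}, B τ) ∪
          {f | f ∈ B σ ∧ ∀ n, (List.ofFn fun i : Fin n => f i) ∈ S} := by
        intro f hf
        by_cases hall : ∀ n, (List.ofFn fun i : Fin n => f i) ∈ S
        · exact Or.inr ⟨hf, hall⟩
        · push_neg at hall
          obtain ⟨n, hn⟩ := hall
          refine Or.inl (Set.mem_biUnion hn ?_)
          exact ⟨hf.1, ofFn_congr' f (by simp)⟩
      refine Set.Countable.mono hsub (Set.Countable.union ?_ ?_)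
      · refine Set.Countable.biUnion (Set.to_countable _) ?_
        intro τ hτ
        by_cases hτT : τ ∈ T
        · by_contra hc
          exact hτ ⟨hτT, hc⟩
        · refine Set.Countable.mono ?_ Set.countable_empty
          intro f hf
          exact absurd (hf.2 ▸ hf.1 τ.length) hτT
      · -- this set is a subsingleton
        refine Set.Subsingleton.countable ?_
        intro f hf g hg
        by_contra hne
        obtain ⟨n0, hn0⟩ := Function.ne_iff.mp hne
        have hex : ∃ n, f n ≠ g n := ⟨n0, hn0⟩
        have hfg : f (Nat.find hex) ≠ g (Nat.find hex) := Nat.find_spec hex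
        set n := Nat.find hex with hn
        set m := max (n + 1) (σ.length + 1) with hm
        have hnm : n < m := lt_of_lt_of_le (Nat.lt_succ_self n) (le_max_left _ _)
        have hσm : σ.length < m := lt_of_lt_of_le (Nat.lt_succ_self _) (le_max_right _ _)
        have hσf : σ = List.ofFn fun i : Fin σ.length => f i := hf.1.2.symm
        have hσg : σ = List.ofFn fun i : Fin σ.length => g i := hg.1.2.symm
        have hpf : σ <+: List.ofFn fun i : Fin m => f i := hσf ▸ ofFn_prefix' f hσm.le
        have hpg : σ <+: List.ofFn fun i : Fin m => g i := hσg ▸ ofFn_prefix' g hσm.le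
        have hneτ : σ ≠ List.ofFn fun i : Fin m => f i := by
          intro he
          have : σ.length = m := by rw [he]; simp
          omega
        have hneτ' : σ ≠ List.ofFn fun i : Fin m => g i := by
          intro he
          have : σ.length = m := by rw [he]; simp
          omega
        have hττ' : (List.ofFn fun i : Fin m => f i) ≠ List.ofFn fun i : Fin m => g i := by
          intro he
          apply hfg
          have h1 := congrArg (fun l : List ℕ => l.getD n 0) he
          rw [List.getD_eq_getElem _ _ (by simpa using hnm),
            List.getD_eq_getElem _ _ (by simpa using hnm)] at h1
          simpa using h1
        exact hcon _ (hf.2 m) _ (hg.2 m) ⟨hpf, hneτ⟩ ⟨hpg, hneτ'⟩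
          (incomp_of_length_eq (by simp) hττ')
  · -- converse: perfect subtree gives uncountable body
    rintro ⟨S, hST, ⟨s0, hs0⟩, hcl, hperf⟩ hcount
    classical
    choose! t0 ht0S t1 ht1S hgood using hperf
    have h0 : ∀ σ ∈ S, t0 σ ∈ S ∧ σ <+: t0 σ ∧ σ ≠ t0 σ :=
      fun σ hσ => ⟨ht0S σ hσ, (hgood σ hσ).1⟩
    have h1 : ∀ σ ∈ S, t1 σ ∈ S ∧ σ <+: t1 σ ∧ σ ≠ t1 σ :=
      fun σ hσ => ⟨ht1S σ hσ, (hgood σ hσ).2.1⟩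
    have hinc : ∀ σ ∈ S, Incomp (t0 σ) (t1 σ) := fun σ hσ => (hgood σ hσ).2.2
    -- the path associated with a binary sequence
    set E : List Bool → List ℕ := buildE t0 t1 s0 with hE
    set P : (ℕ → Bool) → ℕ → ℕ := fun f k => (E (stage f (k + 1))).getD k 0 with hP
    have hElen : ∀ l : List Bool, l.length ≤ (E l).length := buildE_length hs0 h0 h1
    have hEmono : ∀ {l₂ l₁ : List Bool}, l₁ <:+ l₂ → E l₁ <+: E l₂ :=
      fun h => buildE_suffix_mono hs0 h0 h1 h
    have hEmem : ∀ l, E l ∈ S := buildE_mem hs0 h0 h1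
    -- initial segments of `P f`
    have hinit : ∀ (f : ℕ → Bool) (n N : ℕ), n ≤ N →
        (List.ofFn fun i : Fin n => P f i) = (E (stage f N)).take n := by
      intro f n N hnN
      have hlen : n ≤ (E (stage f N)).length := by
        calc n ≤ N := hnN
        _ = (stage f N).length := (stage_length f N).symm
        _ ≤ _ := hElen _
      apply List.ext_getElem
      · simpa using hlen
      · intro i h1' h2'
        have hi : i < n := by simpa using h1'
        have hpre : E (stage f (i + 1)) <+: E (stage f N) :=
          hEmono (stage_suffix f (by omega))
        have hilen : i < (E (stage f (i + 1))).length :=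
          lt_of_lt_of_le (by omega) ((stage_length f (i + 1)) ▸ hElen (stage f (i + 1)))
        have hge : (E (stage f (i + 1)))[i]'hilen
            = (E (stage f N))[i]'(lt_of_lt_of_le hilen hpre.length_le) :=
          hpre.getElem hilen
        simp only [List.getElem_take, List.getElem_ofFn]
        rw [hP]
        simp only
        rw [List.getD_eq_getElem _ _ hilen, hge]
    -- each `P f` is in the body of `T`
    have hmem : ∀ f : ℕ → Bool, P f ∈ body T := by
      intro f n
      rw [hinit f n n le_rfl]
      exact hST (hcl _ (hEmem (stage f n)) _ (List.take_prefix _ _))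
    -- key: `E (stage f n)` is an initial segment of `P f`
    have hEinit : ∀ (f : ℕ → Bool) (n : ℕ),
        E (stage f n) = List.ofFn fun i : Fin (E (stage f n)).length => P f i := by
      intro f n
      have hn := hElen (stage f n)
      rw [stage_length] at hn
      have hpre : E (stage f n) <+: E (stage f (E (stage f n)).length) :=
        hEmono (stage_suffix f hn)
      rw [hinit f (E (stage f n)).length (E (stage f n)).length le_rfl]
      exact (take_of_prefix hpre).symm
    -- injectivity
    have hinj : Function.Injective P := by
      intro f g hPfg
      by_contra hne
      obtain ⟨n0, hn0⟩ := Function.ne_iff.mp hne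
      have hex : ∃ n, f n ≠ g n := ⟨n0, hn0⟩
      have hfg : f (Nat.find hex) ≠ g (Nat.find hex) := Nat.find_spec hex
      set n := Nat.find hex with hn
      have hmin : ∀ k < n, f k = g k := by
        intro k hk
        by_contra hk'
        exact Nat.find_min hex hk hk'
      have hst : stage f n = stage g n := stage_congr hmin
      -- the two branches are incomparable
      have hincAB : Incomp (E (stage f (n + 1))) (E (stage g (n + 1))) := by
        rw [stage_succ, stage_succ, hst]
        have hmemn := hEmem (stage g n)
        have := hinc _ hmemn
        rcases Bool.eq_false_or_eq_true (f n) with hfn | hfn <;>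
          rcases Bool.eq_false_or_eq_true (g n) with hgn | hgn
        · exact absurd (hfn.trans hgn.symm) hfg
        · rw [hfn, hgn]
          simpa [hE, buildE] using ⟨this.2, this.1⟩
        · rw [hfn, hgn]
          simpa [hE, buildE] using this
        · exact absurd (hfn.trans hgn.symm) hfg
      -- but both are initial segments of the same sequence
      have hA := hEinit f (n + 1)
      have hB := hEinit g (n + 1)
      rw [hPfg] at hA
      rcases le_total (E (stage f (n + 1))).length (E (stage g (n + 1))).length with hle | hle
      · exact hincAB.1 (by rw [hA, hB]; exact ofFn_prefix' _ hle)
      · exact hincAB.2 (by rw [hA, hB]; exact ofFn_prefix' _ hle)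
    -- conclude
    apply not_countable_cantor
    have := hcount.to_subtype
    exact Function.Injective.countable
      (f := fun f : ℕ → Bool => (⟨P f, hmem f⟩ : body T))
      (fun a b hab => hinj (congrArg Subtype.val hab))
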